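/- Let W : ℝ³ → ℝ be continuously differentiable and let r : ℝ → ℝ³ be twice differentiable with velocity u := ṙ satisfying |u(t)| < 1 for all t. Suppose the dynamical equation d/dt(−W(r(t))·u(t)) = −∇W(r(t)) holds. Then the function t ↦ W(r(t))²·(1 − |u(t)|²) is constant. In particular, if W(r(t)) < 0 for all t and u(t₀) = 0 at some time t₀, then −W(r(t)) = m₀·(1−|u(t)|²)^{−1/2} for all t, where m₀ := −W(r(t₀)). -/

import Mathlib

open scoped BigOperators

/-- if the dynamics `d/dt(-W(r)u) = -∇W(r)` holds with `u = ṙ` and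
`|u| < 1`, then `W(r(t))²(1 - |u(t)|²)` is conserved; in particular, if `W(r(t)) < 0`
and `u(t₀) = 0`, then `-W(r(t)) = m₀ (1-|u(t)|²)^{-1/2}` with `m₀ := -W(r(t₀))`. -/
theorem vacuum_field_mass_relation
    (W : (Fin 3 → ℝ) → ℝ) (hW : ContDiff ℝ 1 W)
    (r u : ℝ → Fin 3 → ℝ)
    (hu : ∀ t, HasDerivAt r (u t) t)
    (hu1 : ∀ t, Real.sqrt (∑ i, u t i ^ 2) < 1)
    (hdyn : ∀ t, HasDerivAt (fun t' => fun i => -W (r t') * u t' i)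
        (fun i => -fderiv ℝ W (r t) (Pi.single i 1)) t) :
    (∀ t₁ t₂, W (r t₁) ^ 2 * (1 - ∑ i, u t₁ i ^ 2)
        = W (r t₂) ^ 2 * (1 - ∑ i, u t₂ i ^ 2)) ∧
    ((∀ t, W (r t) < 0) → ∀ t₀, u t₀ = 0 → ∀ t,
        -W (r t) = (-W (r t₀)) / Real.sqrt (1 - ∑ i, u t i ^ 2)) := by
  classical
  have hWdiff : Differentiable ℝ W := hW.differentiable one_ne_zero
  set D : ℝ → Fin 3 → ℝ := fun t i => fderiv ℝ W (r t) (Pi.single i 1) with hD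
  have hg : ∀ t, HasDerivAt (fun t' => W (r t')) (fderiv ℝ W (r t) (u t)) t := fun t =>
    (hWdiff (r t)).hasFDerivAt.comp_hasDerivAt t (hu t)
  have hfd : ∀ t, fderiv ℝ W (r t) (u t) = ∑ i, u t i * D t i := by
    intro t
    conv_lhs => rw [pi_eq_sum_univ (u t), map_sum]
    simp only [map_smul, smul_eq_mul, hD]
    refine Finset.sum_congr rfl fun i _ => ?_
    congr 2
    ext j
    simp [Pi.single_apply, eq_comm]
  have hp : ∀ t i, HasDerivAt (fun t' => -W (r t') * u t' i) (-D t i) t := by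
    intro t i
    exact (hasDerivAt_pi.mp (hdyn t)) i
  set f : ℝ → ℝ := fun t => W (r t) ^ 2 * (1 - ∑ i, u t i ^ 2) with hf
  have hfe : ∀ t, f t = W (r t) ^ 2 - ∑ i, (-W (r t) * u t i) ^ 2 := by
    intro t
    simp only [hf, Fin.sum_univ_three]
    ring
  have hderiv : ∀ t, HasDerivAt f 0 t := by
    intro t
    have h1 : HasDerivAt (fun t' => W (r t') ^ 2 - ∑ i, (-W (r t') * u t' i) ^ 2)
        ((2 : ℕ) * W (r t) ^ 1 * fderiv ℝ W (r t) (u t)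
          - ∑ i, (2 : ℕ) * (-W (r t) * u t i) ^ 1 * (-D t i)) t := by
      exact ((hg t).pow 2).sub
        (HasDerivAt.fun_sum fun i _ => ((hp t i).pow 2))
    have h2 : ((2 : ℕ) * W (r t) ^ 1 * fderiv ℝ W (r t) (u t)
          - ∑ i, (2 : ℕ) * (-W (r t) * u t i) ^ 1 * (-D t i)) = 0 := by
      rw [hfd t]
      push_cast
      rw [Finset.mul_sum]
      rw [← Finset.sum_sub_distrib]
      apply Finset.sum_eq_zero
      intro i _
      ring
    rw [h2] at h1
    exact h1.congr_of_eventuallyEq (Filter.Eventually.of_forall hfe)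
  have hconst : ∀ t₁ t₂, f t₁ = f t₂ :=
    is_const_of_deriv_eq_zero (fun t => (hderiv t).differentiableAt)
      (fun t => (hderiv t).deriv)
  refine ⟨hconst, ?_⟩
  intro hWneg t₀ hu0 t
  have hs0 : (0 : ℝ) ≤ ∑ i, u t i ^ 2 := Finset.sum_nonneg fun i _ => sq_nonneg _
  have hs1 : ∑ i, u t i ^ 2 < 1 := by
    have := hu1 t
    nlinarith [Real.sq_sqrt hs0, Real.sqrt_nonneg (∑ i, u t i ^ 2)]
  have hpos : (0 : ℝ) < 1 - ∑ i, u t i ^ 2 := by linarith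
  have hft₀ : f t₀ = W (r t₀) ^ 2 := by
    simp [hf, hu0]
  have hkey : W (r t) ^ 2 = W (r t₀) ^ 2 / (1 - ∑ i, u t i ^ 2) := by
    have h := hconst t t₀
    rw [hft₀] at h
    rw [eq_div_iff hpos.ne']
    simpa [hf] using h
  have h1 : -W (r t) = Real.sqrt (W (r t) ^ 2) := by
    rw [Real.sqrt_sq_eq_abs, abs_of_neg (hWneg t)]
  have h2 : -W (r t₀) = Real.sqrt (W (r t₀) ^ 2) := by
    rw [Real.sqrt_sq_eq_abs, abs_of_neg (hWneg t₀)]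
  rw [h1, h2, hkey, Real.sqrt_div (sq_nonneg _)]
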